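/- Let f : ℝ → ℝ be defined by f(μ) = 12(3μ+2)(1+μ)/(15μ² + 34μ + 8). For every real μ with 2/3 ≤ μ ≤ 2/√3 one has f(μ) ≥ (6/71)(11 + 8√3), with equality if and only if μ = 2/√3. -/
import Mathlib


/-- For `f μ = 12(3μ+2)(1+μ)/(15μ² + 34μ + 8)` and every real `μ` with
`2/3 ≤ μ ≤ 2/√3` one has `f μ ≥ (6/71)(11 + 8√3)`, with equality iff `μ = 2/√3`. -/
theorem stmt1 (f : ℝ → ℝ)
    (hf : ∀ μ : ℝ, f μ = 12 * (3 * μ + 2) * (1 + μ) / (15 * μ ^ 2 + 34 * μ + 8)) :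
    ∀ μ : ℝ, 2 / 3 ≤ μ → μ ≤ 2 / Real.sqrt 3 →
      f μ ≥ 6 / 71 * (11 + 8 * Real.sqrt 3) ∧
      (f μ = 6 / 71 * (11 + 8 * Real.sqrt 3) ↔ μ = 2 / Real.sqrt 3) := by
  intro μ h1 h2
  set s := Real.sqrt 3 with hsdef
  have hs : s ^ 2 = 3 := Real.sq_sqrt (by norm_num)
  have hs0 : (0:ℝ) < s := Real.sqrt_pos.mpr (by norm_num)
  have hslb : (1.7:ℝ) < s := by nlinarith
  have hsub : s < 1.9 := by nlinarith
  have hμs : μ * s ≤ 2 := by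
    have := (le_div_iff₀ hs0).mp h2
    linarith
  have h3μ : 3 * μ ≤ 2 * s := by nlinarith
  have hD : (0:ℝ) < 15 * μ ^ 2 + 34 * μ + 8 := by nlinarith
  have hP : (0:ℝ) < 98 * s - 96 - (261 - 120 * s) * μ := by nlinarith
  have key : 12 * (3 * μ + 2) * (1 + μ) * 71
      - 6 / 71 * (11 + 8 * s) * (15 * μ ^ 2 + 34 * μ + 8) * 71
      = 2 * (2 * s - 3 * μ) * (98 * s - 96 - (261 - 120 * s) * μ) := by
    linear_combination (-(480 * μ + 392)) * hs
  have hμ0 : (2:ℝ) / s = 2 * s / 3 := by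
    rw [div_eq_div_iff hs0.ne' (by norm_num : (3:ℝ) ≠ 0)]
    nlinarith
  constructor
  · rw [hf μ, ge_iff_le, le_div_iff₀ hD]
    nlinarith [mul_nonneg (by linarith : (0:ℝ) ≤ 2 * s - 3 * μ) hP.le]
  · constructor
    · intro h
      rw [hf μ, div_eq_iff hD.ne'] at h
      have hz : 2 * (2 * s - 3 * μ) * (98 * s - 96 - (261 - 120 * s) * μ) = 0 := by
        linarith [key, h]
      have : 2 * s - 3 * μ = 0 := by
        rcases mul_eq_zero.mp hz with h' | h'
        · rcases mul_eq_zero.mp h' with h'' | h''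
          · norm_num at h''
          · exact h''
        · linarith
      rw [hμ0]; linarith
    · intro h
      rw [hf μ, h, hμ0, div_eq_iff (by positivity)]
      linear_combination ((-320 * s - 392) / 71) * hs
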